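/- Let A ∈ SU(2,1) with f(tr(A)) = 0. Then there exists a real constant c > 0 such that for every natural number n ≥ 1 and all indices i, j ∈ {1,2,3}, the (i,j) entry of Aⁿ has absolute value at most c·n². -/

import Mathlib

set_option maxHeartbeats 1000000

open Matrix

/-- The matrix `J = diag(1,1,-1)`. -/
def Jmat : Matrix (Fin 3) (Fin 3) ℂ := Matrix.diagonal ![1, 1, -1]

/-- `A ∈ SU(2,1)`: `det A = 1` and `Aᴴ J A = J` (equivalently `A⁻¹ = J Aᴴ J`). -/
def IsSU21 (A : Matrix (Fin 3) (Fin 3) ℂ) : Prop :=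
  A.det = 1 ∧ Aᴴ * Jmat * A = Jmat

/-- The function `f(t) = |t|⁴ − 8 Re(t³) + 18 |t|² − 27`. -/
noncomputable def fdisc (t : ℂ) : ℝ :=
  ‖t‖ ^ 4 - 8 * (t ^ 3).re + 18 * ‖t‖ ^ 2 - 27

/-- The second elementary symmetric function of the eigenvalues (sum of principal 2×2 minors). -/
noncomputable def e2aux (M : Matrix (Fin 3) (Fin 3) ℂ) : ℂ :=
  M 0 0 * M 1 1 - M 0 1 * M 1 0 + M 0 0 * M 2 2 - M 0 2 * M 2 0 + M 1 1 * M 2 2 - M 1 2 * M 2 1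

/-- Cayley–Hamilton for 3×3 complex matrices, by brute force. -/
lemma ch3aux (M : Matrix (Fin 3) (Fin 3) ℂ) :
    M ^ 3 = M.trace • M ^ 2 - e2aux M • M + M.det • (1 : Matrix (Fin 3) (Fin 3) ℂ) := by
  ext i j
  fin_cases i <;> fin_cases j <;>
    simp [pow_succ, Matrix.mul_apply, Fin.sum_univ_three, Matrix.trace_fin_three,
      Matrix.det_fin_three, e2aux, Matrix.one_apply] <;> ring

lemma e2aux_eq_conj_trace (A : Matrix (Fin 3) (Fin 3) ℂ) (hA : IsSU21 A) :
    e2aux A = starRingEnd ℂ A.trace := by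
  obtain ⟨hdet, hJ⟩ := hA
  have hJJ : Jmat * Jmat = 1 := by
    ext i j; fin_cases i <;> fin_cases j <;>
      simp [Jmat, Matrix.mul_apply, Fin.sum_univ_three, Matrix.one_apply]
  have hBA : (Jmat * Aᴴ * Jmat) * A = 1 := by
    calc (Jmat * Aᴴ * Jmat) * A = Jmat * (Aᴴ * Jmat * A) := by noncomm_ring
    _ = 1 := by rw [hJ, hJJ]
  have hinv : A⁻¹ = Jmat * Aᴴ * Jmat := Matrix.inv_eq_left_inv hBA
  have hadj : A.adjugate = A⁻¹ := by
    rw [Matrix.inv_def, hdet, Ring.inverse_one, one_smul]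
  have h1 : (A.adjugate).trace = e2aux A := by
    rw [Matrix.adjugate_fin_three]
    simp [Matrix.trace_fin_three, e2aux]
    ring
  have h2 : (Jmat * Aᴴ * Jmat).trace = starRingEnd ℂ A.trace := by
    simp [Matrix.trace_fin_three, Jmat, Matrix.mul_apply, Fin.sum_univ_three,
      Matrix.conjTranspose_apply, Matrix.diagonal]
  rw [← h1, hadj, hinv, h2]

open Polynomial in
/-- If `fdisc t = 0`, then the polynomial `x³ - t x² + conj(t) x - 1` has a repeated root. -/
lemma roots_exist_aux (t : ℂ) (hf : fdisc t = 0) :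
    ∃ lam mu : ℂ, t = 2 * lam + mu ∧ starRingEnd ℂ t = lam ^ 2 + 2 * lam * mu ∧
      lam ^ 2 * mu = 1 := by
  set s := starRingEnd ℂ t with hs
  set P : Cubic ℂ := ⟨1, -t, s, -1⟩ with hP
  have ha : P.a ≠ 0 := one_ne_zero
  have hsplit : Splits (P.toPoly.map (RingHom.id ℂ)) := IsAlgClosed.splits _
  obtain ⟨x, y, z, h3⟩ := (P.splits_iff_roots_eq_three ha).mp hsplit
  have hb := P.b_eq_three_roots ha h3
  have hc := P.c_eq_three_roots ha h3
  have hd := P.d_eq_three_roots ha h3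
  simp only [hP, RingHom.id_apply, one_mul] at hb hc hd
  have hv1 : t = x + y + z := by linear_combination -hb
  have hv2 : s = x * y + x * z + y * z := hc
  have hv3 : x * y * z = 1 := by linear_combination hd
  have hdisc := P.discr_eq_prod_three_roots ha h3
  have hPdisc : P.discr = t ^ 2 * s ^ 2 - 4 * s ^ 3 - 4 * t ^ 3 + 18 * t * s - 27 := by
    simp only [Cubic.discr, hP]; ring
  have h1 : t * s = ((‖t‖ : ℝ) : ℂ) ^ 2 := by
    rw [hs, Complex.mul_conj, Complex.normSq_eq_norm_sq]; push_cast; ring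
  have h2 : t ^ 3 + s ^ 3 = 2 * (((t ^ 3).re : ℝ) : ℂ) := by
    rw [hs, ← map_pow, Complex.add_conj]; push_cast; ring
  have hfz : ((fdisc t : ℝ) : ℂ) = P.discr := by
    rw [hPdisc]; unfold fdisc; push_cast
    linear_combination (-(t * s) - ((‖t‖ : ℝ) : ℂ) ^ 2 - 18) * h1 + 4 * h2
  have hzero : P.discr = 0 := by rw [← hfz, hf]; simp
  have hprod : ((x - y) * (x - z) * (y - z)) ^ 2 = 0 := by
    have := hdisc
    simp only [RingHom.id_apply, hzero, hP, one_mul] at this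
    rw [← hP, hzero] at this
    linear_combination -this
  have : (x - y) * (x - z) * (y - z) = 0 :=
    pow_eq_zero_iff (n := 2) (by norm_num) |>.mp hprod
  rcases mul_eq_zero.mp this with h | h
  · rcases mul_eq_zero.mp h with h | h
    · exact ⟨x, z, by linear_combination hv1 - h, by linear_combination hv2 - (x + z) * h,
        by linear_combination hv3 + x * z * h⟩
    · exact ⟨x, y, by linear_combination hv1 - h, by linear_combination hv2 - (x + y) * h,
        by linear_combination hv3 + x * y * h⟩
  · exact ⟨y, x, by linear_combination hv1 - h, by linear_combination hv2 - (x + y) * h,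
      by linear_combination hv3 + x * y * h⟩

/-- A repeated eigenvalue configuration of an `SU(2,1)` element has all eigenvalues of modulus 1. -/
lemma unit_modulus_aux (lam mu : ℂ) (h3 : lam ^ 2 * mu = 1)
    (hcj : starRingEnd ℂ (2 * lam + mu) = lam ^ 2 + 2 * lam * mu) :
    ‖lam‖ = 1 ∧ ‖mu‖ = 1 := by
  have hlam0 : lam ≠ 0 := by rintro rfl; simp at h3
  set b := starRingEnd ℂ lam with hb
  have hb0 : b ≠ 0 := by simpa [hb] using hlam0
  have hmu : mu = lam⁻¹ ^ 2 := by field_simp; linear_combination h3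
  have hcmu : starRingEnd ℂ mu = b⁻¹ ^ 2 := by rw [hmu]; simp [← hb]
  have key : 2 * lam * b ^ 3 + lam = lam ^ 3 * b ^ 2 + 2 * b ^ 2 := by
    have h := hcj
    rw [map_add, _root_.map_mul, hcmu, hmu] at h
    have h2 : starRingEnd ℂ (2 : ℂ) = 2 := map_ofNat _ 2
    rw [h2, ← hb] at h
    field_simp at h
    have hl : lam * (2 * lam * b ^ 3 + lam) = lam * (lam ^ 3 * b ^ 2 + 2 * b ^ 2) := by
      linear_combination lam * h
    exact mul_left_cancel₀ hlam0 hl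
  set r : ℝ := ‖lam‖ with hr
  have hu : lam * b = ((r ^ 2 : ℝ) : ℂ) := by
    rw [hb, Complex.mul_conj, Complex.normSq_eq_norm_sq]
  by_cases hr1 : r = 1
  · refine ⟨hr1, ?_⟩
    rw [hmu]; simp [map_pow, map_inv₀, ← hr, hr1]
  · exfalso
    have hu1 : (((r ^ 2 : ℝ) : ℂ)) - 1 ≠ 0 := by
      intro hcon
      apply hr1
      have h1 : ((r ^ 2 : ℝ) : ℂ) = 1 := by linear_combination hcon
      have h2 : (r ^ 2 : ℝ) = 1 := by exact_mod_cast h1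
      nlinarith [norm_nonneg lam, hr ▸ (rfl : r = ‖lam‖)]
    have key2 : 2 * b ^ 2 = lam * (((r ^ 2 : ℝ) : ℂ) + 1) := by
      have expand : 2 * b ^ 2 * (((r ^ 2 : ℝ) : ℂ) - 1) =
          lam * (((r ^ 2 : ℝ) : ℂ) + 1) * (((r ^ 2 : ℝ) : ℂ) - 1) := by
        rw [← hu]; linear_combination key
      exact mul_right_cancel₀ hu1 expand
    have habs := congrArg (‖·‖) key2
    simp only [norm_mul, norm_pow, Complex.norm_ofNat, Complex.norm_two] at habs
    rw [Complex.norm_conj] at habs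
    have hpos : ‖((r ^ 2 : ℝ) : ℂ) + 1‖ = r ^ 2 + 1 := by
      have hc : (((r ^ 2 : ℝ) : ℂ) + 1) = ((r ^ 2 + 1 : ℝ) : ℂ) := by push_cast; ring
      rw [hc, Complex.norm_real]
      exact Real.norm_of_nonneg (by positivity)
    rw [hpos, ← hr] at habs
    have hrpos : 0 < r := norm_pos_iff.mpr hlam0
    have h0 : r * (r - 1) ^ 2 = 0 := by linear_combination -habs
    rcases mul_eq_zero.mp h0 with h | h
    · exact absurd h (ne_of_gt hrpos)
    · exact hr1 (by nlinarith [h])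

theorem quadratic_growth_of_fzero (A : Matrix (Fin 3) (Fin 3) ℂ) (hA : IsSU21 A)
    (hf : fdisc A.trace = 0) :
    ∃ c : ℝ, 0 < c ∧ ∀ n : ℕ, 1 ≤ n → ∀ i j : Fin 3,
      ‖(A ^ n) i j‖ ≤ c * (n : ℝ) ^ 2 := by
  obtain ⟨hdet, hJ⟩ := hA
  have hs : e2aux A = starRingEnd ℂ A.trace := e2aux_eq_conj_trace A ⟨hdet, hJ⟩
  obtain ⟨lam, mu, ht, hsc, hlm⟩ := roots_exist_aux A.trace hf
  obtain ⟨hlam1, hmu1⟩ : ‖lam‖ = 1 ∧ ‖mu‖ = 1 :=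
    unit_modulus_aux lam mu hlm (by rw [← ht]; exact hsc)
  -- Cayley–Hamilton with the factored coefficients
  have hch : A ^ 3 = (2 * lam + mu) • A ^ 2 - (lam ^ 2 + 2 * lam * mu) • A
      + (lam ^ 2 * mu) • (1 : Matrix (Fin 3) (Fin 3) ℂ) := by
    rw [ch3aux A, hdet, hs, hsc, ht, hlm, one_smul]
  obtain ⟨N, hNdef⟩ : ∃ N : Matrix (Fin 3) (Fin 3) ℂ, N = A - lam • 1 := ⟨_, rfl⟩
  have hA' : A = lam • 1 + N := by rw [hNdef]; module
  have hN : N * N * (A - mu • 1) = 0 := by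
    have h2 : A ^ 2 = A * A := sq A
    have h3 : A ^ 3 = A * A * A := by rw [pow_succ, h2]
    rw [h3, h2] at hch
    rw [hNdef]
    simp only [mul_sub, sub_mul, smul_mul_assoc, Matrix.mul_smul, mul_one, one_mul,
      Matrix.smul_mul, smul_smul]
    rw [hch]
    module
  have hNA : N * A = lam • N + N * N := by
    nth_rewrite 1 [hA']
    rw [mul_add, Matrix.mul_smul, mul_one]
  have hN2A : (N * N) * A = mu • (N * N) := by
    have := hN
    rw [mul_sub, Matrix.mul_smul, mul_one, sub_eq_zero] at this
    exact this
  -- main induction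
  have main : ∀ m : ℕ, ∃ c : ℂ, ‖c‖ ≤ ((m : ℝ) + 1) ^ 2 ∧
      A ^ (m + 1) = (lam ^ (m + 1)) • (1 : Matrix (Fin 3) (Fin 3) ℂ)
        + (((m : ℂ) + 1) * lam ^ m) • N + c • (N * N) := by
    intro m
    induction m with
    | zero =>
      refine ⟨0, by norm_num, ?_⟩
      simp only [Nat.cast_zero, zero_add, pow_one, pow_zero, mul_one, one_mul, zero_smul,
        add_zero, one_smul]
      rw [hA']
    | succ m ih =>
      obtain ⟨c, hcb, hform⟩ := ih
      refine ⟨c * mu + ((m : ℂ) + 1) * lam ^ m, ?_, ?_⟩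
      · have h1 : ‖c * mu + ((m : ℂ) + 1) * lam ^ m‖
            ≤ ‖c‖ * ‖mu‖
              + ‖(m : ℂ) + 1‖ * ‖lam ^ m‖ := by
          refine (norm_add_le _ _).trans ?_
          simp [_root_.map_mul]
        have h2 : ‖(m : ℂ) + 1‖ = (m : ℝ) + 1 := by
          have : ((m : ℂ) + 1) = ((m + 1 : ℕ) : ℂ) := by push_cast; ring
          rw [this, Complex.norm_natCast]; push_cast; ring
        have h3 : ‖lam ^ m‖ = 1 := by rw [norm_pow, hlam1, one_pow]
        rw [hmu1, mul_one, h2, h3, mul_one] at h1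
        refine h1.trans ?_
        have hm : (0 : ℝ) ≤ (m : ℝ) := Nat.cast_nonneg m
        push_cast
        nlinarith [hcb]
      · have hstep : A ^ (m + 1 + 1) = A ^ (m + 1) * A := pow_succ A (m + 1)
        rw [hstep, hform, add_mul, add_mul, Matrix.smul_mul, Matrix.smul_mul, Matrix.smul_mul,
          one_mul, hNA, hN2A]
        nth_rewrite 1 [hA']
        push_cast
        module
  -- assemble the bound
  obtain ⟨N2, hN2def⟩ : ∃ M : Matrix (Fin 3) (Fin 3) ℂ, M = N * N := ⟨_, rfl⟩
  obtain ⟨S1, hS1def⟩ : ∃ S : ℝ, S = ∑ p : Fin 3 × Fin 3, ‖N p.1 p.2‖ := ⟨_, rfl⟩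
  obtain ⟨S2, hS2def⟩ : ∃ S : ℝ, S = ∑ p : Fin 3 × Fin 3, ‖N2 p.1 p.2‖ :=
    ⟨_, rfl⟩
  have hS1 : 0 ≤ S1 := hS1def ▸ Finset.sum_nonneg fun _ _ => norm_nonneg _
  have hS2 : 0 ≤ S2 := hS2def ▸ Finset.sum_nonneg fun _ _ => norm_nonneg _
  have hB1 : ∀ i j : Fin 3, ‖N i j‖ ≤ S1 := by
    intro i j
    rw [hS1def]
    exact Finset.single_le_sum (f := fun p : Fin 3 × Fin 3 => ‖N p.1 p.2‖)
      (fun _ _ => norm_nonneg _) (Finset.mem_univ (i, j))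
  have hB2 : ∀ i j : Fin 3, ‖N2 i j‖ ≤ S2 := by
    intro i j
    rw [hS2def]
    exact Finset.single_le_sum (f := fun p : Fin 3 × Fin 3 => ‖N2 p.1 p.2‖)
      (fun _ _ => norm_nonneg _) (Finset.mem_univ (i, j))
  refine ⟨1 + S1 + S2, by positivity, ?_⟩
  intro n hn i j
  obtain ⟨m, rfl⟩ : ∃ m, n = m + 1 := ⟨n - 1, by omega⟩
  obtain ⟨c, hcb, hform⟩ := main m
  rw [hform, ← hN2def]
  simp only [Matrix.add_apply, Matrix.smul_apply, smul_eq_mul]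
  have hone : ‖(1 : Matrix (Fin 3) (Fin 3) ℂ) i j‖ ≤ 1 := by
    rcases eq_or_ne i j with h | h
    · rw [h, Matrix.one_apply_eq]; simp
    · rw [Matrix.one_apply_ne h]; simp
  have e1 : ‖lam ^ (m + 1) * (1 : Matrix (Fin 3) (Fin 3) ℂ) i j‖ ≤ 1 := by
    rw [norm_mul, norm_pow, hlam1, one_pow, one_mul]; exact hone
  have e2 : ‖((m : ℂ) + 1) * lam ^ m * N i j‖ ≤ ((m : ℝ) + 1) * S1 := by
    rw [norm_mul, norm_mul, norm_pow, hlam1, one_pow, mul_one]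
    have h2 : ‖(m : ℂ) + 1‖ = (m : ℝ) + 1 := by
      have : ((m : ℂ) + 1) = ((m + 1 : ℕ) : ℂ) := by push_cast; ring
      rw [this, Complex.norm_natCast]; push_cast; ring
    rw [h2]
    exact mul_le_mul_of_nonneg_left (hB1 i j) (by positivity)
  have e3 : ‖c * N2 i j‖ ≤ ((m : ℝ) + 1) ^ 2 * S2 := by
    rw [norm_mul]
    exact mul_le_mul hcb (hB2 i j) (norm_nonneg _) (by positivity)
  have tri : ‖lam ^ (m + 1) * (1 : Matrix (Fin 3) (Fin 3) ℂ) i j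
        + ((m : ℂ) + 1) * lam ^ m * N i j + c * N2 i j‖
      ≤ 1 + ((m : ℝ) + 1) * S1 + ((m : ℝ) + 1) ^ 2 * S2 := by
    refine (norm_add_le _ _).trans ?_
    refine add_le_add ((norm_add_le _ _).trans (add_le_add e1 e2)) e3
  refine tri.trans ?_
  have hm : (0 : ℝ) ≤ (m : ℝ) := Nat.cast_nonneg m
  push_cast
  nlinarith [mul_nonneg hm hS1, mul_nonneg (mul_nonneg hm hm) hS2, mul_nonneg hm hS2]
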